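/- Let G and H be simple graphs, u ∈ V(G) and v ∈ V(H) with deg_G(u) ≥ 2 and deg_H(v) ≥ 2. Then Cc_{(u,v)}(G × H) ≤ Cc_u(G) · Cc_v(H), with equality if and only if Cc_u(G) = 0 or Cc_v(H) = 0. -/

import Mathlib

variable {α β : Type*}

/-- Tensor (categorical) product of simple graphs. -/
def tensorProdG (G : SimpleGraph α) (H : SimpleGraph β) : SimpleGraph (α × β) where
  Adj x y := G.Adj x.1 y.1 ∧ H.Adj x.2 y.2
  symm := ⟨fun _ _ h => ⟨h.1.symm, h.2.symm⟩⟩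
  loopless := ⟨fun x h => G.loopless.irrefl x.1 h.1⟩

instance (G : SimpleGraph α) (H : SimpleGraph β) [DecidableRel G.Adj] [DecidableRel H.Adj] :
    DecidableRel (tensorProdG G H).Adj := fun x y =>
    inferInstanceAs (Decidable (G.Adj x.1 y.1 ∧ H.Adj x.2 y.2))

/-- Number of triangles incident to `u`: edges of the induced neighborhood. -/
noncomputable def triCount (G : SimpleGraph α) [Fintype α] (u : α) : ℕ :=
  Nat.card (SimpleGraph.induce (G.neighborSet u) G).edgeSet

/-- Local clustering coefficient. -/
noncomputable def locCc (G : SimpleGraph α) [Fintype α] [DecidableRel G.Adj] (u : α) : ℝ :=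
  if 2 ≤ G.degree u then (triCount G u : ℝ) / ((G.degree u).choose 2) else 0

/-- Global clustering coefficient. -/
noncomputable def globCc (G : SimpleGraph α) [Fintype α] [DecidableRel G.Adj] : ℝ :=
  (∑ v, locCc G v) / (Fintype.card α)

/-- Minimum degree of the induced neighborhood of `u`. -/
noncomputable def nbrMinDeg (G : SimpleGraph α) [Fintype α] [DecidableRel G.Adj] (u : α) : ℕ :=
  (SimpleGraph.induce (G.neighborSet u) G).minDegree

/-- Average degree, as a real number. -/
noncomputable def avgDeg (G : SimpleGraph α) [Fintype α] [DecidableRel G.Adj] : ℝ :=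
  (∑ v, (G.degree v : ℝ)) / (Fintype.card α)


variable [Fintype α] [Fintype β] (G : SimpleGraph α) (H : SimpleGraph β)
  [DecidableRel G.Adj] [DecidableRel H.Adj]

lemma tensor_neighborFinset (u : α) (v : β) :
    (tensorProdG G H).neighborFinset (u, v) = G.neighborFinset u ×ˢ H.neighborFinset v := by
  ext ⟨a, b⟩
  simp only [SimpleGraph.mem_neighborFinset, Finset.mem_product]
  exact Iff.rfl

lemma tensor_degree (u : α) (v : β) :
    (tensorProdG G H).degree (u, v) = G.degree u * H.degree v := by
  rw [SimpleGraph.degree, tensor_neighborFinset, Finset.card_product]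
  rfl

def dartEquiv (u : α) (v : β) :
    (SimpleGraph.induce ((tensorProdG G H).neighborSet (u, v)) (tensorProdG G H)).Dart ≃
      (SimpleGraph.induce (G.neighborSet u) G).Dart ×
        (SimpleGraph.induce (H.neighborSet v) H).Dart where
  toFun d := (⟨(⟨d.fst.val.1, d.fst.prop.1⟩, ⟨d.snd.val.1, d.snd.prop.1⟩), d.adj.1⟩,
              ⟨(⟨d.fst.val.2, d.fst.prop.2⟩, ⟨d.snd.val.2, d.snd.prop.2⟩), d.adj.2⟩)
  invFun p := ⟨(⟨(p.1.fst.val, p.2.fst.val), ⟨p.1.fst.prop, p.2.fst.prop⟩⟩,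
               ⟨(p.1.snd.val, p.2.snd.val), ⟨p.1.snd.prop, p.2.snd.prop⟩⟩),
               ⟨p.1.adj, p.2.adj⟩⟩
  left_inv d := rfl
  right_inv p := rfl

lemma triCount_tensor (u : α) (v : β) :
    triCount (tensorProdG G H) (u, v) = 2 * (triCount G u * triCount H v) := by
  classical
  have hp := (SimpleGraph.induce ((tensorProdG G H).neighborSet (u, v))
      (tensorProdG G H)).dart_card_eq_twice_card_edges
  have hg := (SimpleGraph.induce (G.neighborSet u) G).dart_card_eq_twice_card_edges
  have hh := (SimpleGraph.induce (H.neighborSet v) H).dart_card_eq_twice_card_edges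
  have hcong : Fintype.card
      (SimpleGraph.induce ((tensorProdG G H).neighborSet (u, v)) (tensorProdG G H)).Dart =
      Fintype.card (SimpleGraph.induce (G.neighborSet u) G).Dart *
      Fintype.card (SimpleGraph.induce (H.neighborSet v) H).Dart := by
    rw [← Fintype.card_prod]
    exact Fintype.card_congr (dartEquiv G H u v)
  have e1 : triCount (tensorProdG G H) (u, v) =
      (SimpleGraph.induce ((tensorProdG G H).neighborSet (u, v)) (tensorProdG G H)).edgeFinset.card := by
    rw [triCount, Nat.card_eq_fintype_card, SimpleGraph.edgeFinset_card]
  have e2 : triCount G u = (SimpleGraph.induce (G.neighborSet u) G).edgeFinset.card := by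
    rw [triCount, Nat.card_eq_fintype_card, SimpleGraph.edgeFinset_card]
  have e3 : triCount H v = (SimpleGraph.induce (H.neighborSet v) H).edgeFinset.card := by
    rw [triCount, Nat.card_eq_fintype_card, SimpleGraph.edgeFinset_card]
  rw [e1, e2, e3]
  rw [hp, hg, hh] at hcong
  refine Nat.eq_of_mul_eq_mul_left (show 0 < 2 by norm_num) ?_
  rw [hcong]; ring


theorem tensor_locCc_le (u : α) (v : β) (hu : 2 ≤ G.degree u) (hv : 2 ≤ H.degree v) :
    locCc (tensorProdG G H) (u, v) ≤ locCc G u * locCc H v ∧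
      (locCc (tensorProdG G H) (u, v) = locCc G u * locCc H v ↔
        locCc G u = 0 ∨ locCc H v = 0) := by
  have hprod2 : 2 ≤ G.degree u * H.degree v :=
    le_trans hu (Nat.le_mul_of_pos_right _ (by omega))
  have hduv : 2 ≤ (tensorProdG G H).degree (u, v) := by
    rw [tensor_degree]; exact hprod2
  rw [locCc, locCc, locCc, if_pos hu, if_pos hv, if_pos hduv, tensor_degree, triCount_tensor]
  set dg := G.degree u with hdg
  set dh := H.degree v with hdh
  set a := (triCount G u : ℝ) with hadef
  set b := (triCount H v : ℝ) with hbdef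
  have ha : 0 ≤ a := Nat.cast_nonneg _
  have hb : 0 ≤ b := Nat.cast_nonneg _
  have hx : (2:ℝ) ≤ dg := by exact_mod_cast hu
  have hy : (2:ℝ) ≤ dh := by exact_mod_cast hv
  have hCg : (0:ℝ) < ((dg.choose 2 : ℕ) : ℝ) := by exact_mod_cast Nat.choose_pos hu
  have hCh : (0:ℝ) < ((dh.choose 2 : ℕ) : ℝ) := by exact_mod_cast Nat.choose_pos hv
  have hCp : (0:ℝ) < (((dg * dh).choose 2 : ℕ) : ℝ) := by
    exact_mod_cast Nat.choose_pos hprod2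
  have key : 2 * ((dg.choose 2 : ℕ) : ℝ) * ((dh.choose 2 : ℕ) : ℝ)
      < (((dg * dh).choose 2 : ℕ) : ℝ) := by
    rw [Nat.cast_choose_two, Nat.cast_choose_two, Nat.cast_choose_two]
    push_cast
    nlinarith [mul_pos (mul_pos (show (0:ℝ) < (dg:ℝ) by linarith)
      (show (0:ℝ) < (dh:ℝ) by linarith)) (show (0:ℝ) < (dg:ℝ) + (dh:ℝ) - 2 by linarith)]
  have hcast : ((2 * (triCount G u * triCount H v) : ℕ) : ℝ) = 2 * (a * b) := by push_cast; ring
  rw [hcast, div_mul_div_comm]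
  rcases (mul_nonneg ha hb).lt_or_eq with ht | ht
  · -- 0 < a*b : strict inequality
    have han : 0 < a := by
      rcases ha.lt_or_eq with h | h; · exact h
      · exfalso; rw [← h] at ht; simp at ht
    have hbn : 0 < b := by
      rcases hb.lt_or_eq with h | h; · exact h
      · exfalso; rw [← h] at ht; simp at ht
    have hstrict : 2 * (a * b) / (((dg * dh).choose 2 : ℕ) : ℝ)
        < a * b / (((dg.choose 2 : ℕ) : ℝ) * ((dh.choose 2 : ℕ) : ℝ)) := by
      rw [div_lt_div_iff₀ hCp (mul_pos hCg hCh)]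
      nlinarith [mul_lt_mul_of_pos_left key ht]
    refine ⟨hstrict.le, ?_⟩
    constructor
    · intro h; exact absurd h hstrict.ne
    · rintro (h | h)
      · exact absurd h (div_ne_zero han.ne' hCg.ne')
      · exact absurd h (div_ne_zero hbn.ne' hCh.ne')
  · -- a*b = 0
    have hab : a * b = 0 := ht.symm
    rw [hab]
    constructor
    · simp
    · simp only [mul_zero, zero_mul, zero_div, div_eq_zero_iff, hCg.ne', hCh.ne', or_false,
        true_iff]
      rcases mul_eq_zero.mp hab with h | h
      · exact Or.inl h
      · exact Or.inr h
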